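/- Let n ≥ 1 and let ψ : [0,1]^n → ℝ be monotonic, continuous, concave, and translation-invariant with ψ(c·1) = c for all c ∈ [0,1]. Then there exists a function φ : Δ_n → [0, +∞] that is convex, lower semicontinuous, and grounded (inf_{μ ∈ Δ_n} φ(μ) = 0), such that for all u ∈ [0,1]^n, ψ(u) = min_{μ ∈ Δ_n} ( Σ_{i=1}^n μ_i u_i + φ(μ) ), the minimum being attained. -/

import Mathlib

open scoped ENNReal
open Filter Topology

lemma cube_mem_interior {n : ℕ} (hn : 1 ≤ n) {u : Fin n → ℝ}
    (hu : ∀ i, 0 < u i ∧ u i < 1) :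
    u ∈ interior (Set.Icc (0 : Fin n → ℝ) 1) := by
  have : Nonempty (Fin n) := ⟨⟨0, hn⟩⟩
  have hne : (Finset.univ : Finset (Fin n)).Nonempty := Finset.univ_nonempty
  set δ : ℝ := Finset.univ.inf' hne (fun i => min (u i) (1 - u i)) with hδ
  have hδpos : 0 < δ := by
    rw [hδ, Finset.lt_inf'_iff]
    intro i _
    exact lt_min (hu i).1 (by linarith [(hu i).2])
  rw [mem_interior]
  refine ⟨Metric.ball u δ, ?_, Metric.isOpen_ball, Metric.mem_ball_self hδpos⟩
  intro w hw
  have hle : ∀ i, |w i - u i| < δ := by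
    intro i
    calc |w i - u i| = dist (w i) (u i) := (Real.dist_eq _ _).symm
      _ ≤ dist w u := dist_le_pi_dist w u i
      _ < δ := hw
  constructor
  · intro i
    have h1 : δ ≤ u i := le_trans (Finset.inf'_le _ (Finset.mem_univ i)) (min_le_left _ _)
    have := abs_lt.1 (hle i)
    simp only [Pi.zero_apply]
    linarith [this.1]
  · intro i
    have h1 : δ ≤ 1 - u i := le_trans (Finset.inf'_le _ (Finset.mem_univ i)) (min_le_right _ _)
    have := abs_lt.1 (hle i)
    simp only [Pi.one_apply]
    linarith [this.2]

lemma cube_supergrad {n : ℕ} (hn : 1 ≤ n) (ψ : (Fin n → ℝ) → ℝ)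
    (hcont : ContinuousOn ψ (Set.Icc (0 : Fin n → ℝ) 1))
    (hconc : ∀ u v : Fin n → ℝ, u ∈ Set.Icc (0 : Fin n → ℝ) 1 →
      v ∈ Set.Icc (0 : Fin n → ℝ) 1 → ∀ α : ℝ, α ∈ Set.Icc (0 : ℝ) 1 →
      α * ψ u + (1 - α) * ψ v ≤ ψ (α • u + (1 - α) • v))
    {u : Fin n → ℝ} (hu : ∀ i, 0 < u i ∧ u i < 1) :
    ∃ g : Fin n → ℝ, ∀ v ∈ Set.Icc (0 : Fin n → ℝ) 1,
      ψ v ≤ ψ u + ((∑ i, g i * v i) - ∑ i, g i * u i) := by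
  classical
  set C : Set (Fin n → ℝ) := Set.Icc 0 1 with hC
  have hCconv : Convex ℝ C := convex_Icc _ _
  set A : Set ((Fin n → ℝ) × ℝ) := {p | p.1 ∈ interior C ∧ p.2 < ψ p.1} with hA
  have hAopen : IsOpen A := by
    have h1 : ContinuousOn (fun p : (Fin n → ℝ) × ℝ => ψ p.1 - p.2)
        ((interior C) ×ˢ (Set.univ : Set ℝ)) := by
      apply ContinuousOn.sub
      · exact (hcont.mono interior_subset).comp continuous_fst.continuousOn
          (fun p hp => hp.1)
      · exact continuous_snd.continuousOn
    have h2 : A = ((interior C) ×ˢ (Set.univ : Set ℝ)) ∩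
        (fun p : (Fin n → ℝ) × ℝ => ψ p.1 - p.2) ⁻¹' (Set.Ioi 0) := by
      ext p
      simp only [hA, Set.mem_setOf_eq, Set.mem_inter_iff, Set.mem_prod, Set.mem_univ,
        and_true, Set.mem_preimage, Set.mem_Ioi]
      constructor
      · rintro ⟨h, h'⟩; exact ⟨h, by linarith⟩
      · rintro ⟨h, h'⟩; exact ⟨h, by linarith⟩
    rw [h2]
    exact h1.isOpen_inter_preimage (isOpen_interior.prod isOpen_univ) isOpen_Ioi
  have hAconv : Convex ℝ A := by
    rintro ⟨a1, a2⟩ ⟨ha1, ha2⟩ ⟨b1, b2⟩ ⟨hb1, hb2⟩ α β hα hβ hαβ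
    have hmem : α • a1 + β • b1 ∈ interior C := hCconv.interior ha1 hb1 hα hβ hαβ
    refine ⟨hmem, ?_⟩
    have hkey : α * ψ a1 + β * ψ b1 ≤ ψ (α • a1 + β • b1) := by
      have hβα : β = 1 - α := by linarith
      subst hβα
      exact hconc a1 b1 (interior_subset ha1) (interior_subset hb1) α ⟨hα, by linarith⟩
    show α • a2 + β • b2 < ψ (α • a1 + β • b1)
    simp only [smul_eq_mul]
    rcases eq_or_lt_of_le hα with h | h
    · have hβ1 : β = 1 := by linarith
      have hα0 : α = 0 := h.symm
      subst hα0; subst hβ1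
      simp only [zero_mul, one_mul, zero_add, zero_smul, one_smul] at hkey ⊢
      linarith
    · have h1 : α * a2 < α * ψ a1 := by exact (mul_lt_mul_iff_right₀ h).2 ha2
      have h2 : β * b2 ≤ β * ψ b1 := mul_le_mul_of_nonneg_left hb2.le hβ
      linarith
  have huint : u ∈ interior C := cube_mem_interior hn hu
  have hunotA : ((u, ψ u) : (Fin n → ℝ) × ℝ) ∉ A := fun h => lt_irrefl _ h.2
  obtain ⟨f, hf⟩ := geometric_hahn_banach_open_point hAconv hAopen hunotA
  set c : ℝ := f ((0 : Fin n → ℝ), (1 : ℝ)) with hc_def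
  have hfsplit : ∀ (v : Fin n → ℝ) (t : ℝ), f (v, t) = f (v, 0) + t * c := by
    intro v t
    have h : ((v, t) : (Fin n → ℝ) × ℝ) = (v, 0) + t • ((0 : Fin n → ℝ), (1 : ℝ)) := by
      ext <;> simp
    rw [h, map_add, map_smul, smul_eq_mul]
  have hc : 0 < c := by
    have h := hf (u, ψ u - 1) ⟨huint, show ψ u - 1 < ψ u by linarith⟩
    rw [hfsplit u (ψ u - 1), hfsplit u (ψ u)] at h
    linarith
  set g : Fin n → ℝ := fun i => -(f ((Pi.single i 1 : Fin n → ℝ), 0)) / c with hg_def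
  have hlin : ∀ v : Fin n → ℝ, f (v, 0) = -(c * ∑ i, g i * v i) := by
    intro v
    have hv : ((v, (0 : ℝ)) : (Fin n → ℝ) × ℝ)
        = ∑ i, (v i) • (((Pi.single i 1 : Fin n → ℝ), (0 : ℝ))) := by
      apply Prod.ext
      · rw [Prod.fst_sum]
        simp only [Prod.smul_mk, Prod.fst]
        rw [show (∑ i, v i • (Pi.single i 1 : Fin n → ℝ))
            = ∑ i, (Pi.single i (v i) : Fin n → ℝ) from ?_, Finset.univ_sum_single]
        apply Finset.sum_congr rfl
        intro i _
        rw [← Pi.single_smul, smul_eq_mul, mul_one]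
      · rw [Prod.snd_sum]
        simp
    rw [hv, map_sum]
    simp only [map_smul, smul_eq_mul]
    rw [Finset.mul_sum, ← Finset.sum_neg_distrib]
    apply Finset.sum_congr rfl
    intro i _
    rw [hg_def]
    field_simp
  -- supporting inequality on interior points
  have hint : ∀ v ∈ interior C, ψ v ≤ ψ u + ((∑ i, g i * v i) - ∑ i, g i * u i) := by
    intro v hv
    have key : ψ v * c + f (v, 0) ≤ ψ u * c + f (u, 0) := by
      apply le_of_forall_pos_lt_add
      intro ε hε
      have h := hf (v, ψ v - ε / c)
        ⟨hv, show ψ v - ε / c < ψ v by have := div_pos hε hc; linarith⟩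
      rw [hfsplit v (ψ v - ε / c), hfsplit u (ψ u)] at h
      have : (ψ v - ε / c) * c = ψ v * c - ε := by field_simp
      nlinarith
    rw [hlin v, hlin u] at key
    have := hc
    nlinarith
  -- extend to all of C by concavity
  refine ⟨g, ?_⟩
  intro v hv
  set t : ℝ := 1/2 with ht
  have hwmem : (t • u + (1 - t) • v) ∈ interior C := by
    apply cube_mem_interior hn
    intro i
    have h1 := (hu i).1
    have h2 := (hu i).2
    have h3 : 0 ≤ v i := hv.1 i
    have h4 : v i ≤ 1 := hv.2 i
    constructor
    · simp only [Pi.add_apply, Pi.smul_apply, smul_eq_mul]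
      rw [ht]; nlinarith
    · simp only [Pi.add_apply, Pi.smul_apply, smul_eq_mul]
      rw [ht]; nlinarith
  have hconc' : t * ψ u + (1 - t) * ψ v ≤ ψ (t • u + (1 - t) • v) :=
    hconc u v ⟨fun i => (hu i).1.le, fun i => (hu i).2.le⟩ hv t (by rw [ht]; norm_num)
  have hsup := hint _ hwmem
  have hsum : ∑ i, g i * (t • u + (1 - t) • v) i
      = t * (∑ i, g i * u i) + (1 - t) * (∑ i, g i * v i) := by
    rw [Finset.mul_sum, Finset.mul_sum, ← Finset.sum_add_distrib]
    apply Finset.sum_congr rfl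
    intro i _
    simp only [Pi.add_apply, Pi.smul_apply, smul_eq_mul]
    ring
  rw [hsum] at hsup
  rw [ht] at *
  linarith

lemma cube_grad_mem {n : ℕ} (hn : 1 ≤ n) (ψ : (Fin n → ℝ) → ℝ)
    (hmono : ∀ u v : Fin n → ℝ, u ∈ Set.Icc (0 : Fin n → ℝ) 1 →
      v ∈ Set.Icc (0 : Fin n → ℝ) 1 → (∀ i, v i < u i) → ψ v < ψ u)
    (hti : ∀ u : Fin n → ℝ, u ∈ Set.Icc (0 : Fin n → ℝ) 1 → ∀ c : ℝ,
      (u + fun _ => c) ∈ Set.Icc (0 : Fin n → ℝ) 1 →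
      ψ (u + fun _ => c) = ψ u + c)
    {u : Fin n → ℝ} (hu : ∀ i, 0 < u i ∧ u i < 1)
    {g : Fin n → ℝ}
    (hg : ∀ v ∈ Set.Icc (0 : Fin n → ℝ) 1,
      ψ v ≤ ψ u + ((∑ i, g i * v i) - ∑ i, g i * u i)) :
    (∀ i, 0 ≤ g i) ∧ ∑ i, g i = 1 := by
  classical
  have : Nonempty (Fin n) := ⟨⟨0, hn⟩⟩
  have hne : (Finset.univ : Finset (Fin n)).Nonempty := Finset.univ_nonempty
  set δ : ℝ := Finset.univ.inf' hne (fun i => min (u i) (1 - u i)) with hδ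
  have hδpos : 0 < δ := by
    rw [hδ, Finset.lt_inf'_iff]
    intro i _
    exact lt_min (hu i).1 (by linarith [(hu i).2])
  have hδle : ∀ i, δ ≤ u i ∧ δ ≤ 1 - u i := fun i =>
    ⟨le_trans (Finset.inf'_le _ (Finset.mem_univ i)) (min_le_left _ _),
     le_trans (Finset.inf'_le _ (Finset.mem_univ i)) (min_le_right _ _)⟩
  have huC : u ∈ Set.Icc (0 : Fin n → ℝ) 1 :=
    ⟨fun i => (hu i).1.le, fun i => (hu i).2.le⟩
  -- translation lemma: sum of g i * (u i + c) - sum g i u i = c * sum g i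
  have hsum : ∀ c : ℝ, (∑ i, g i * (u i + c)) - ∑ i, g i * u i = c * ∑ i, g i := by
    intro c
    rw [Finset.mul_sum, ← Finset.sum_sub_distrib]
    apply Finset.sum_congr rfl
    intro i _
    ring
  have hsum1 : ∑ i, g i = 1 := by
    have h1 : ∀ c : ℝ, |c| ≤ δ → ψ u + c ≤ ψ u + c * ∑ i, g i := by
      intro c hc
      have hmemc : (u + fun _ => c) ∈ Set.Icc (0 : Fin n → ℝ) 1 := by
        rw [abs_le] at hc
        constructor
        · intro i
          have := (hδle i).1
          simp only [Pi.add_apply, Pi.zero_apply]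
          linarith [hc.1]
        · intro i
          have := (hδle i).2
          simp only [Pi.add_apply, Pi.one_apply]
          linarith [hc.2]
      have hv := hg _ hmemc
      rw [hti u huC c hmemc] at hv
      have : ∑ i, g i * (u + fun _ => c : Fin n → ℝ) i = ∑ i, g i * (u i + c) :=
        Finset.sum_congr rfl fun i _ => rfl
      rw [this, hsum c] at hv
      linarith
    have hpos := h1 δ (by rw [abs_of_pos hδpos])
    have hneg := h1 (-δ) (by rw [abs_neg, abs_of_pos hδpos])
    nlinarith
  refine ⟨?_, hsum1⟩
  intro i
  -- v := u + Pi.single i δ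
  set v : Fin n → ℝ := u + Pi.single i δ with hv_def
  have hvC : v ∈ Set.Icc (0 : Fin n → ℝ) 1 := by
    constructor
    · intro j
      simp only [hv_def, Pi.add_apply, Pi.zero_apply]
      rcases eq_or_ne i j with rfl | hij
      · rw [Pi.single_eq_same]; linarith [(hu i).1]
      · rw [Pi.single_eq_of_ne (Ne.symm hij)]; linarith [(hu j).1]
    · intro j
      simp only [hv_def, Pi.add_apply, Pi.one_apply]
      rcases eq_or_ne i j with rfl | hij
      · rw [Pi.single_eq_same]; linarith [(hδle i).2]
      · rw [Pi.single_eq_of_ne (Ne.symm hij)]; linarith [(hu j).2]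
  have hψuv : ψ u ≤ ψ v := by
    apply le_of_forall_pos_lt_add
    intro ε hε
    set ε' : ℝ := min ε δ with hε'
    have hε'pos : 0 < ε' := lt_min hε hδpos
    have hmemc : (u + fun _ => (-ε')) ∈ Set.Icc (0 : Fin n → ℝ) 1 := by
      constructor
      · intro j
        simp only [Pi.add_apply, Pi.zero_apply]
        have := (hδle j).1
        have : ε' ≤ δ := min_le_right _ _
        linarith [(hδle j).1]
      · intro j
        simp only [Pi.add_apply, Pi.one_apply]
        linarith [(hu j).2, hε'pos]
    have hlt : ψ (u + fun _ => (-ε')) < ψ v := by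
      apply hmono v _ hvC hmemc
      intro j
      simp only [hv_def, Pi.add_apply]
      rcases eq_or_ne i j with rfl | hij
      · rw [Pi.single_eq_same]; linarith
      · rw [Pi.single_eq_of_ne (Ne.symm hij)]; linarith
    rw [hti u huC (-ε') hmemc] at hlt
    have : ε' ≤ ε := min_le_left _ _
    linarith
  have hvg := hg v hvC
  have hsumv : (∑ j, g j * v j) - ∑ j, g j * u j = g i * δ := by
    rw [← Finset.sum_sub_distrib]
    rw [Finset.sum_eq_single i]
    · simp only [hv_def, Pi.add_apply, Pi.single_eq_same]; ring
    · intro j _ hij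
      simp only [hv_def, Pi.add_apply, Pi.single_eq_of_ne hij]
      ring
    · intro h; exact absurd (Finset.mem_univ i) h
  rw [hsumv] at hvg
  nlinarith

/-- Analytic core of the paper's Theorem 6 (variational representation): a
monotonic, continuous, concave, translation-invariant function on the unit
cube with `ψ(c·1) = c` admits a representation
`ψ(u) = min_{μ ∈ Δ_n} (Σ μ_i u_i + φ(μ))` for some grounded, convex, lower
semicontinuous penalty `φ : Δ_n → [0,∞]`, the minimum being attained. -/
theorem stmt_15 {n : ℕ} (hn : 1 ≤ n) (ψ : (Fin n → ℝ) → ℝ)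
    (hmono : ∀ u v : Fin n → ℝ, u ∈ Set.Icc (0 : Fin n → ℝ) 1 →
      v ∈ Set.Icc (0 : Fin n → ℝ) 1 → (∀ i, v i < u i) → ψ v < ψ u)
    (hcont : ContinuousOn ψ (Set.Icc (0 : Fin n → ℝ) 1))
    (hconc : ∀ u v : Fin n → ℝ, u ∈ Set.Icc (0 : Fin n → ℝ) 1 →
      v ∈ Set.Icc (0 : Fin n → ℝ) 1 → ∀ α : ℝ, α ∈ Set.Icc (0 : ℝ) 1 →
      α * ψ u + (1 - α) * ψ v ≤ ψ (α • u + (1 - α) • v))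
    (hti : ∀ u : Fin n → ℝ, u ∈ Set.Icc (0 : Fin n → ℝ) 1 → ∀ c : ℝ,
      (u + fun _ => c) ∈ Set.Icc (0 : Fin n → ℝ) 1 →
      ψ (u + fun _ => c) = ψ u + c)
    (hdiag : ∀ c : ℝ, c ∈ Set.Icc (0 : ℝ) 1 → ψ (fun _ => c) = c) :
    ∃ φ : (Fin n → ℝ) → ℝ≥0∞,
      (∀ μ ν : Fin n → ℝ,
        μ ∈ {μ : Fin n → ℝ | (∀ i, 0 ≤ μ i) ∧ ∑ i, μ i = 1} →
        ν ∈ {μ : Fin n → ℝ | (∀ i, 0 ≤ μ i) ∧ ∑ i, μ i = 1} →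
        ∀ α : ℝ, α ∈ Set.Icc (0 : ℝ) 1 →
        φ (α • μ + (1 - α) • ν) ≤
          ENNReal.ofReal α * φ μ + ENNReal.ofReal (1 - α) * φ ν) ∧
      LowerSemicontinuousOn φ {μ : Fin n → ℝ | (∀ i, 0 ≤ μ i) ∧ ∑ i, μ i = 1} ∧
      (⨅ μ ∈ {μ : Fin n → ℝ | (∀ i, 0 ≤ μ i) ∧ ∑ i, μ i = 1}, φ μ) = 0 ∧
      (∀ u ∈ Set.Icc (0 : Fin n → ℝ) 1,
        IsLeast {r : EReal |
            ∃ μ ∈ {μ : Fin n → ℝ | (∀ i, 0 ≤ μ i) ∧ ∑ i, μ i = 1},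
              r = ((∑ i, μ i * u i : ℝ) : EReal) + (φ μ : EReal)}
          ((ψ u : ℝ) : EReal)) := by
  classical
  set C : Set (Fin n → ℝ) := Set.Icc 0 1 with hC
  set Δ : Set (Fin n → ℝ) := {μ : Fin n → ℝ | (∀ i, 0 ≤ μ i) ∧ ∑ i, μ i = 1} with hΔ
  have h0C : (0 : Fin n → ℝ) ∈ C := ⟨le_refl _, fun i => zero_le_one⟩
  have hψ0 : ψ 0 = 0 := by
    have := hdiag 0 ⟨le_refl _, zero_le_one⟩
    exact this
  -- the dual function s
  set s : (Fin n → ℝ) → ℝ :=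
    fun μ => sSup ((fun v => ψ v - ∑ i, μ i * v i) '' C) with hs_def
  obtain ⟨vm, hvmC, hvm⟩ := (isCompact_Icc (α := Fin n → ℝ)).exists_isMaxOn
    ⟨0, h0C⟩ hcont
  have hbdd : ∀ μ : Fin n → ℝ, BddAbove ((fun v => ψ v - ∑ i, μ i * v i) '' C) := by
    intro μ
    refine ⟨ψ vm + ∑ i, |μ i|, ?_⟩
    rintro x ⟨v, hvC, rfl⟩
    dsimp only
    have h1 : ψ v ≤ ψ vm := hvm hvC
    have h2 : -(∑ i, μ i * v i) ≤ ∑ i, |μ i| := by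
      rw [← Finset.sum_neg_distrib]
      apply Finset.sum_le_sum
      intro i _
      have hv0 := hvC.1 i
      have hv1 := hvC.2 i
      simp only [Pi.zero_apply] at hv0
      simp only [Pi.one_apply] at hv1
      calc -(μ i * v i) ≤ |μ i * v i| := neg_le_abs _
        _ = |μ i| * |v i| := abs_mul _ _
        _ ≤ |μ i| * 1 := by
            apply mul_le_mul_of_nonneg_left _ (abs_nonneg _)
            rw [abs_of_nonneg hv0]; exact hv1
        _ = |μ i| := mul_one _
    linarith
  have hCne : C.Nonempty := ⟨0, h0C⟩
  have hne : ∀ μ : Fin n → ℝ,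
      ((fun v => ψ v - ∑ i, μ i * v i) '' C).Nonempty := fun μ => hCne.image _
  have hs_ge : ∀ μ : Fin n → ℝ, ∀ v ∈ C, ψ v - ∑ i, μ i * v i ≤ s μ :=
    fun μ v hv => le_csSup (hbdd μ) ⟨v, hv, rfl⟩
  have hs_le : ∀ (μ : Fin n → ℝ) (B : ℝ),
      (∀ v ∈ C, ψ v - ∑ i, μ i * v i ≤ B) → s μ ≤ B := by
    intro μ B hB
    apply csSup_le (hne μ)
    rintro x ⟨v, hv, rfl⟩
    exact hB v hv
  have hs0 : ∀ μ : Fin n → ℝ, 0 ≤ s μ := by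
    intro μ
    have := hs_ge μ 0 h0C
    simpa [hψ0] using this
  set φ : (Fin n → ℝ) → ℝ≥0∞ := fun μ => ENNReal.ofReal (s μ) with hφ_def
  -- convexity of s
  have hs_conv : ∀ (μ ν : Fin n → ℝ) (α : ℝ), 0 ≤ α → α ≤ 1 →
      s (α • μ + (1 - α) • ν) ≤ α * s μ + (1 - α) * s ν := by
    intro μ ν α ha0 ha1
    apply hs_le
    intro v hv
    have e : ψ v - ∑ i, (α • μ + (1 - α) • ν) i * v i
        = α * (ψ v - ∑ i, μ i * v i) + (1 - α) * (ψ v - ∑ i, ν i * v i) := by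
      simp only [Pi.add_apply, Pi.smul_apply, smul_eq_mul]
      have h : ∑ i, (α * μ i + (1 - α) * ν i) * v i
          = α * ∑ i, μ i * v i + (1 - α) * ∑ i, ν i * v i := by
        rw [Finset.mul_sum, Finset.mul_sum, ← Finset.sum_add_distrib]
        exact Finset.sum_congr rfl fun i _ => by ring
      rw [h]; ring
    rw [e]
    have h1 := hs_ge μ v hv
    have h2 := hs_ge ν v hv
    have := mul_le_mul_of_nonneg_left h1 ha0
    have := mul_le_mul_of_nonneg_left h2 (by linarith : (0:ℝ) ≤ 1 - α)
    linarith
  -- continuity of s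
  have hs_lip : ∀ μ ν : Fin n → ℝ, s μ ≤ s ν + ∑ i, |μ i - ν i| := by
    intro μ ν
    apply hs_le
    intro v hv
    have h1 := hs_ge ν v hv
    have h2 : (∑ i, ν i * v i) - ∑ i, μ i * v i ≤ ∑ i, |μ i - ν i| := by
      rw [← Finset.sum_sub_distrib]
      apply Finset.sum_le_sum
      intro i _
      have hv0 := hv.1 i
      have hv1 := hv.2 i
      simp only [Pi.zero_apply] at hv0
      simp only [Pi.one_apply] at hv1
      calc ν i * v i - μ i * v i = -((μ i - ν i) * v i) := by ring
        _ ≤ |(μ i - ν i) * v i| := neg_le_abs _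
        _ = |μ i - ν i| * |v i| := abs_mul _ _
        _ ≤ |μ i - ν i| * 1 := by
            apply mul_le_mul_of_nonneg_left _ (abs_nonneg _)
            rw [abs_of_nonneg hv0]; exact hv1
        _ = _ := mul_one _
    linarith
  have hsumdist : ∀ μ ν : Fin n → ℝ, ∑ i, |μ i - ν i| ≤ (n : ℝ) * dist μ ν := by
    intro μ ν
    calc ∑ i, |μ i - ν i| ≤ ∑ _i : Fin n, dist μ ν := by
          apply Finset.sum_le_sum
          intro i _
          rw [← Real.dist_eq]
          exact dist_le_pi_dist μ ν i
      _ = (n : ℝ) * dist μ ν := by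
          rw [Finset.sum_const, Finset.card_univ, Fintype.card_fin, nsmul_eq_mul]
  have hs_cont : Continuous s := by
    have hlw : LipschitzWith n s := by
      apply LipschitzWith.of_dist_le_mul
      intro μ ν
      rw [Real.dist_eq, abs_le]
      push_cast
      constructor
      · have := hs_lip ν μ
        have h2 := hsumdist ν μ
        rw [dist_comm ν μ] at h2
        linarith
      · have := hs_lip μ ν
        have h2 := hsumdist μ ν
        linarith
    exact hlw.continuous
  have hφ_cont : Continuous φ := ENNReal.continuous_ofReal.comp hs_cont
  -- packaged supergradient
  have hsupp : ∀ w : Fin n → ℝ, (∀ i, 0 < w i ∧ w i < 1) →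
      ∃ g ∈ Δ, ∀ v ∈ C, ψ v ≤ ψ w + ((∑ i, g i * v i) - ∑ i, g i * w i) := by
    intro w hw
    obtain ⟨g, hg⟩ := cube_supergrad hn ψ hcont hconc hw
    obtain ⟨h1, h2⟩ := cube_grad_mem hn ψ hmono hti hw hg
    exact ⟨g, ⟨h1, h2⟩, hg⟩
  -- grounding point
  have hhalf : ∀ i : Fin n, (0:ℝ) < (fun _ => (1:ℝ)/2) i ∧ (fun _ => (1:ℝ)/2) i < 1 :=
    fun i => by norm_num
  obtain ⟨g₀, hg₀Δ, hg₀⟩ := hsupp (fun _ => 1/2) hhalf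
  have hψhalf : ψ (fun _ => (1:ℝ)/2) = 1/2 := hdiag _ (by norm_num)
  have hg₀half : ∑ i, g₀ i * (fun _ => (1:ℝ)/2) i = 1/2 := by
    have h : ∑ i, g₀ i * (fun _ => (1:ℝ)/2) i = (1/2) * ∑ i, g₀ i := by
      rw [Finset.mul_sum]
      exact Finset.sum_congr rfl fun i _ => by ring
    rw [h, hg₀Δ.2, mul_one]
  have hsg₀ : s g₀ ≤ 0 := by
    apply hs_le
    intro v hv
    have h := hg₀ v hv
    rw [hψhalf, hg₀half] at h
    linarith
  -- compactness of Δ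
  have hΔsubC : Δ ⊆ C := by
    rintro μ ⟨h1, h2⟩
    refine ⟨fun i => by simpa using h1 i, fun i => ?_⟩
    simp only [Pi.one_apply]
    calc μ i ≤ ∑ j, μ j := Finset.single_le_sum (fun j _ => h1 j) (Finset.mem_univ i)
      _ = 1 := h2
  have hΔclosed : IsClosed Δ := by
    have he : Δ = (⋂ i, {μ : Fin n → ℝ | 0 ≤ μ i}) ∩ {μ : Fin n → ℝ | ∑ i, μ i = 1} := by
      ext μ
      simp [hΔ, Set.mem_iInter]
    rw [he]
    exact (isClosed_iInter fun i =>
        isClosed_le continuous_const (continuous_apply i)).inter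
      (isClosed_eq (continuous_finset_sum _ fun i _ => continuous_apply i) continuous_const)
  have hΔcomp : IsCompact Δ := (isCompact_Icc).of_isClosed_subset hΔclosed hΔsubC
  refine ⟨φ, ?_, ?_, ?_, ?_⟩
  · -- convexity
    intro μ ν hμ hν α hα
    have h := hs_conv μ ν α hα.1 hα.2
    calc φ (α • μ + (1 - α) • ν) = ENNReal.ofReal (s (α • μ + (1 - α) • ν)) := rfl
      _ ≤ ENNReal.ofReal (α * s μ + (1 - α) * s ν) := ENNReal.ofReal_le_ofReal h
      _ = ENNReal.ofReal (α * s μ) + ENNReal.ofReal ((1 - α) * s ν) := by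
          rw [ENNReal.ofReal_add (mul_nonneg hα.1 (hs0 μ))
            (mul_nonneg (by linarith [hα.2]) (hs0 ν))]
      _ = ENNReal.ofReal α * φ μ + ENNReal.ofReal (1 - α) * φ ν := by
          rw [ENNReal.ofReal_mul hα.1, ENNReal.ofReal_mul (by linarith [hα.2] : (0:ℝ) ≤ 1 - α)]
  · -- lower semicontinuity
    exact hφ_cont.lowerSemicontinuous.lowerSemicontinuousOn _
  · -- groundedness
    refine le_antisymm ?_ zero_le
    calc (⨅ μ ∈ Δ, φ μ) ≤ φ g₀ := iInf₂_le g₀ hg₀Δ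
      _ = 0 := ENNReal.ofReal_eq_zero.2 hsg₀
  · -- duality
    intro u huC
    set F : (Fin n → ℝ) → ℝ := fun μ => (∑ i, μ i * u i) + s μ with hF
    have hFcont : Continuous F :=
      (continuous_finset_sum _ fun i _ => (continuous_apply i).mul continuous_const).add hs_cont
    obtain ⟨μ₀, hμ₀Δ, hμ₀min⟩ := hΔcomp.exists_isMinOn ⟨g₀, hg₀Δ⟩ hFcont.continuousOn
    have hlow : ∀ μ ∈ Δ, ψ u ≤ F μ := by
      intro μ hμ
      have := hs_ge μ u huC
      simp only [hF]
      linarith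
    have hupper : F μ₀ ≤ ψ u := by
      set w : ℝ → (Fin n → ℝ) := fun t => (1 - t) • u + t • (fun _ => (1:ℝ)/2) with hw
      have hwint : ∀ t : ℝ, t ∈ Set.Ioc (0:ℝ) 1 → ∀ i, 0 < w t i ∧ w t i < 1 := by
        intro t ht i
        simp only [hw, Pi.add_apply, Pi.smul_apply, smul_eq_mul]
        have h0 := huC.1 i
        have h1 := huC.2 i
        simp only [Pi.zero_apply] at h0
        simp only [Pi.one_apply] at h1
        constructor
        · nlinarith [ht.1, ht.2]
        · nlinarith [ht.1, ht.2]
      have hkey : ∀ t ∈ Set.Ioc (0:ℝ) 1, F μ₀ ≤ ψ (w t) + t := by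
        intro t ht
        obtain ⟨gt, hgtΔ, hgt⟩ := hsupp (w t) (hwint t ht)
        have h1 : F μ₀ ≤ F gt := hμ₀min hgtΔ
        have h2 : s gt ≤ ψ (w t) - ∑ i, gt i * w t i := by
          apply hs_le
          intro v hv
          have := hgt v hv
          linarith
        have h3 : (∑ i, gt i * u i) - ∑ i, gt i * w t i ≤ t := by
          have e : (∑ i, gt i * u i) - ∑ i, gt i * w t i
              = t * ∑ i, gt i * (u i - 1/2) := by
            rw [Finset.mul_sum, ← Finset.sum_sub_distrib]
            apply Finset.sum_congr rfl
            intro i _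
            simp only [hw, Pi.add_apply, Pi.smul_apply, smul_eq_mul]
            ring
          rw [e]
          have hb : ∑ i, gt i * (u i - 1/2) ≤ 1 := by
            calc ∑ i, gt i * (u i - 1/2) ≤ ∑ i, gt i * 1 := by
                  apply Finset.sum_le_sum
                  intro i _
                  apply mul_le_mul_of_nonneg_left _ (hgtΔ.1 i)
                  have := huC.2 i
                  simp only [Pi.one_apply] at this
                  linarith
              _ = 1 := by
                  rw [Finset.sum_congr rfl fun i _ => mul_one (gt i), hgtΔ.2]
          nlinarith [ht.1]
        simp only [hF] at h1 ⊢
        linarith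
      have hIoc : Set.Ioc (0:ℝ) 1 ∈ 𝓝[>] (0:ℝ) :=
        Ioc_mem_nhdsGT_of_mem (Set.mem_Ico.2 ⟨le_refl 0, zero_lt_one⟩)
      have hwc : Continuous w := by
        apply Continuous.add
        · exact (continuous_const.sub continuous_id).smul continuous_const
        · exact continuous_id.smul continuous_const
      have h1 : Tendsto w (𝓝[>] (0:ℝ)) (𝓝 u) := by
        have ht : Tendsto w (𝓝 0) (𝓝 (w 0)) := hwc.tendsto 0
        have hw0 : w 0 = u := by
          simp [hw]
        rw [hw0] at ht
        exact ht.mono_left nhdsWithin_le_nhds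
      have h2 : ∀ᶠ t in 𝓝[>] (0:ℝ), w t ∈ C := by
        filter_upwards [hIoc] with t ht
        exact ⟨fun i => ((hwint t ht i).1).le, fun i => ((hwint t ht i).2).le⟩
      have h3 : Tendsto w (𝓝[>] (0:ℝ)) (𝓝[C] u) := by
        rw [tendsto_nhdsWithin_iff]
        exact ⟨h1, h2⟩
      have h4 : Tendsto (fun t => ψ (w t) + t) (𝓝[>] (0:ℝ)) (𝓝 (ψ u + 0)) := by
        apply Tendsto.add
        · exact (hcont u huC).tendsto.comp h3
        · exact tendsto_id.mono_left nhdsWithin_le_nhds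
      have h5 : F μ₀ ≤ ψ u + 0 := by
        apply ge_of_tendsto h4
        filter_upwards [hIoc] with t ht
        exact hkey t ht
      linarith
    have hFeq : F μ₀ = ψ u := le_antisymm hupper (hlow μ₀ hμ₀Δ)
    have hcoe : ∀ μ : Fin n → ℝ, (φ μ : EReal) = ((s μ : ℝ) : EReal) := by
      intro μ
      show ((ENNReal.ofReal (s μ) : ℝ≥0∞) : EReal) = _
      rw [EReal.coe_ennreal_ofReal, sup_eq_left.mpr (hs0 μ)]
    constructor
    · refine ⟨μ₀, hμ₀Δ, ?_⟩
      rw [hcoe μ₀, ← EReal.coe_add]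
      exact_mod_cast hFeq.symm
    · rintro r ⟨μ, hμ, rfl⟩
      rw [hcoe μ, ← EReal.coe_add, EReal.coe_le_coe_iff]
      exact hlow μ hμ
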